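/- Assume λ > 0. Fix x ∈ ℝ^d and nonnegative reals h_{ij} ≥ 0 (i ∈ [n], j ∈ [m]); write h_i = (h_{i1},…,h_{im}) ∈ ℝ^m. Define H = (1/(nm)) Σ_{i,j} h_{ij} a_{ij} a_{ij}ᵀ and the step x⁺ = x − (H + λ I)^{-1} ∇P(x). Then ‖x⁺ − x*‖² ≤ (2R⁴/(n m λ²)) · ( Σ_{i=1}^n ‖h_i − h_i(x*)‖² ) · ‖x − x*‖² + (ν² R⁶/(2λ²)) · ‖x − x*‖⁴. -/

import Mathlib

open MeasureTheory Filter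
open scoped BigOperators

noncomputable section

abbrev Euc (d : ℕ) := EuclideanSpace ℝ (Fin d)

/-- Real inner product on Euclidean space. -/
def rinner {d : ℕ} (a x : Euc d) : ℝ := inner ℝ a x

/-- The rank-one matrix `a aᵀ`. -/
def outerMat {d : ℕ} (a : Euc d) : Matrix (Fin d) (Fin d) ℝ := fun p q => a p * a q

/-- `(1/(nm)) ∑_{ij} c_{ij} a_{ij} a_{ij}ᵀ`. -/
def Hmat {n m d : ℕ} (a : Fin n → Fin m → Euc d) (c : Fin n → Fin m → ℝ) :
    Matrix (Fin d) (Fin d) ℝ :=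
  ((n : ℝ) * m)⁻¹ • ∑ i, ∑ j, c i j • outerMat (a i j)

/-- Matrix-vector multiplication as a map on Euclidean space. -/
def mulVecE {d : ℕ} (M : Matrix (Fin d) (Fin d) ℝ) (v : Euc d) : Euc d := WithLp.toLp 2 (M.mulVec v)

/-- The vector `h_i(y) = (φ''_{i1}(⟨a_{i1},y⟩), …, φ''_{im}(⟨a_{im},y⟩)) ∈ ℝ^m`. -/
def hvecOf {n m d : ℕ} (a : Fin n → Fin m → Euc d) (φ'' : Fin n → Fin m → ℝ → ℝ)
    (i : Fin n) (y : Euc d) : Euc m :=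
  WithLp.toLp 2 (fun j => φ'' i j (rinner (a i j) y))

/-- Componentwise positive part on ℝ^m. -/
def posPartE {m : ℕ} (v : Euc m) : Euc m := WithLp.toLp 2 (fun j => max (v j) 0)

/- ===== Auxiliary lemmas ===== -/

open InnerProductSpace in
theorem nl1_aux_integral_sub_sq (ν t s : ℝ) :
    ∫ u in t..s, ν * (u - t) = ν * (s - t) ^ 2 / 2 := by
  rw [intervalIntegral.integral_const_mul]
  have := intervalIntegral.integral_comp_sub_right (a := t) (b := s) (fun u => u) t
  rw [this, sub_self, integral_id]
  ring

theorem nl1_aux_taylor_lip (φ : ℝ → ℝ) (hφ : ContDiff ℝ 2 φ) (ν : ℝ)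
    (hlip : ∀ s t, |deriv (deriv φ) s - deriv (deriv φ) t| ≤ ν * |s - t|) (s t : ℝ) :
    |deriv φ s - deriv φ t - deriv (deriv φ) t * (s - t)| ≤ ν / 2 * (s - t) ^ 2 := by
  set g := deriv φ with hg
  set g' := deriv (deriv φ) with hg'
  have h2 : ContDiff ℝ (1 + 1) φ := by norm_num; exact hφ
  have hg1 : ContDiff ℝ 1 g := (contDiff_succ_iff_deriv.mp h2).2.2
  have hg01 : ContDiff ℝ (0 + 1) g := by norm_num; exact hg1
  have hcont : Continuous g' := ((contDiff_succ_iff_deriv.mp hg01).2.2).continuous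
  have hsub : Continuous fun u => g' u - g' t := hcont.sub continuous_const
  have hftc : g s - g t = ∫ u in t..s, g' u :=
    (intervalIntegral.integral_deriv_eq_sub
      (fun u _ => (hg1.differentiable one_ne_zero) u)
      (hcont.intervalIntegrable t s)).symm
  have hconst : g' t * (s - t) = ∫ u in t..s, g' t := by simp [mul_comm]
  have key : g s - g t - g' t * (s - t) = ∫ u in t..s, (g' u - g' t) := by
    rw [hftc, hconst, ← intervalIntegral.integral_sub (hcont.intervalIntegrable t s)
      (intervalIntegrable_const)]
  rw [key]
  rcases le_total t s with hts | hst
  · calc |∫ u in t..s, (g' u - g' t)| ≤ ∫ u in t..s, |g' u - g' t| :=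
          intervalIntegral.abs_integral_le_integral_abs hts
        _ ≤ ∫ u in t..s, ν * (u - t) := by
          apply intervalIntegral.integral_mono_on hts
            ((hsub.abs).intervalIntegrable t s)
            (((continuous_const.mul ((continuous_id.sub continuous_const)) : Continuous fun u : ℝ => ν * (u - t))).intervalIntegrable t s)
          intro u hu
          calc |g' u - g' t| ≤ ν * |u - t| := hlip u t
            _ = ν * (u - t) := by rw [abs_of_nonneg (by linarith [hu.1])]
        _ = ν * (s - t) ^ 2 / 2 := nl1_aux_integral_sub_sq ν t s
        _ = ν / 2 * (s - t) ^ 2 := by ring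
  · rw [intervalIntegral.integral_symm, abs_neg]
    calc |∫ u in s..t, (g' u - g' t)| ≤ ∫ u in s..t, |g' u - g' t| :=
          intervalIntegral.abs_integral_le_integral_abs hst
        _ ≤ ∫ u in s..t, ν * (t - u) := by
          apply intervalIntegral.integral_mono_on hst
            ((hsub.abs).intervalIntegrable s t)
            (((continuous_const.mul ((continuous_const.sub continuous_id)) : Continuous fun u : ℝ => ν * (t - u))).intervalIntegrable s t)
          intro u hu
          calc |g' u - g' t| ≤ ν * |u - t| := hlip u t
            _ = ν * (t - u) := by rw [abs_of_nonpos (by linarith [hu.2]), neg_sub]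
        _ = ν / 2 * (s - t) ^ 2 := by
          rw [intervalIntegral.integral_symm]
          have h1 : (fun u : ℝ => ν * (t - u)) = fun u => (-ν) * (u - t) := by
            funext u; ring
          rw [h1, nl1_aux_integral_sub_sq]
          ring

theorem nl1_aux_rinner_eq {d : ℕ} (a v : Euc d) : rinner a v = ∑ p, a p * v p := by
  simp [rinner, PiLp.inner_apply, RCLike.inner_apply]
  exact Finset.sum_congr rfl fun p _ => mul_comm _ _

theorem nl1_aux_esum_apply {d k : ℕ} (w : Fin k → Euc d) (p : Fin d) :
    (∑ i, w i) p = ∑ i, w i p := by rw [WithLp.ofLp_sum]; exact Finset.sum_apply _ _ _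

theorem nl1_aux_esmul_apply {d : ℕ} (r : ℝ) (w : Euc d) (p : Fin d) : (r • w) p = r * w p := rfl

theorem nl1_aux_mulVecE_Hmat {n m d : ℕ} (a : Fin n → Fin m → Euc d) (c : Fin n → Fin m → ℝ)
    (v : Euc d) :
    mulVecE (Hmat a c) v
      = ((n : ℝ) * m)⁻¹ • ∑ i, ∑ j, (c i j * rinner (a i j) v) • a i j := by
  ext p
  simp only [mulVecE, Hmat, Matrix.mulVec, dotProduct, outerMat, Matrix.smul_apply,
    Matrix.sum_apply, smul_eq_mul, nl1_aux_esmul_apply, nl1_aux_esum_apply, nl1_aux_rinner_eq]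
  simp only [Finset.sum_mul, Finset.mul_sum, mul_assoc]
  rw [Finset.sum_comm]
  refine Finset.sum_congr rfl (fun i _ => ?_)
  rw [Finset.sum_comm]
  refine Finset.sum_congr rfl (fun j _ => ?_)
  refine Finset.sum_congr rfl (fun q _ => by ring)

theorem nl1_aux_mulVecE_addlam {n m d : ℕ} (a : Fin n → Fin m → Euc d) (c : Fin n → Fin m → ℝ)
    (lam : ℝ) (v : Euc d) :
    mulVecE (Hmat a c + lam • (1 : Matrix (Fin d) (Fin d) ℝ)) v
      = mulVecE (Hmat a c) v + lam • v := by
  ext p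
  simp [mulVecE, Matrix.add_mulVec, Matrix.smul_mulVec, Matrix.one_mulVec,
    nl1_aux_esmul_apply]

theorem nl1_aux_rinner_Hmat_nonneg {n m d : ℕ} (a : Fin n → Fin m → Euc d)
    (c : Fin n → Fin m → ℝ) (hc : ∀ i j, 0 ≤ c i j) (v : Euc d) :
    0 ≤ rinner v (mulVecE (Hmat a c) v) := by
  rw [nl1_aux_mulVecE_Hmat]
  show (0:ℝ) ≤ inner ℝ v _
  rw [real_inner_smul_right, inner_sum]
  apply mul_nonneg (by positivity)
  apply Finset.sum_nonneg; intro i _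
  rw [inner_sum]
  apply Finset.sum_nonneg; intro j _
  rw [real_inner_smul_right]
  have h : (inner ℝ v (a i j) : ℝ) = rinner (a i j) v := real_inner_comm _ _
  rw [h]
  have := hc i j
  nlinarith [sq_nonneg (rinner (a i j) v)]

theorem nl1_aux_quad_lower {n m d : ℕ} (a : Fin n → Fin m → Euc d) (c : Fin n → Fin m → ℝ)
    (hc : ∀ i j, 0 ≤ c i j) (lam : ℝ) (v : Euc d) :
    lam * ‖v‖ ^ 2 ≤ rinner v (mulVecE (Hmat a c + lam • (1 : Matrix (Fin d) (Fin d) ℝ)) v) := by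
  rw [nl1_aux_mulVecE_addlam]
  show lam * ‖v‖ ^ 2 ≤ inner ℝ v (mulVecE (Hmat a c) v + lam • v)
  rw [inner_add_right, real_inner_smul_right, real_inner_self_eq_norm_sq]
  have := nl1_aux_rinner_Hmat_nonneg a c hc v
  unfold rinner at this
  linarith

theorem nl1_aux_Mdet_isUnit {n m d : ℕ} (a : Fin n → Fin m → Euc d) (c : Fin n → Fin m → ℝ)
    (hc : ∀ i j, 0 ≤ c i j) (lam : ℝ) (hlam : 0 < lam) :
    IsUnit (Hmat a c + lam • (1 : Matrix (Fin d) (Fin d) ℝ)).det := by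
  set M := Hmat a c + lam • (1 : Matrix (Fin d) (Fin d) ℝ) with hM
  have hinj : Function.Injective M.mulVec := by
    intro v v' hvv
    have h0 : M.mulVec (v - v') = 0 := by
      rw [Matrix.mulVec_sub, hvv, sub_self]
    have hq := nl1_aux_quad_lower a c hc lam (WithLp.toLp 2 (v - v'))
    rw [show mulVecE M (WithLp.toLp 2 (v - v')) = WithLp.toLp 2 (M.mulVec (v - v')) from rfl, h0,
      WithLp.toLp_zero] at hq
    have hz : rinner (WithLp.toLp 2 (v - v')) (0 : Euc d) = 0 := by simp [rinner]
    rw [hz] at hq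
    have ht := le_of_mul_le_mul_left ((mul_zero lam) ▸ hq) hlam
    have hn := norm_eq_zero.mp (pow_eq_zero_iff two_ne_zero |>.mp
      (le_antisymm ht (by positivity)))
    exact sub_eq_zero.mp (congrArg WithLp.ofLp hn)
  exact (Matrix.isUnit_iff_isUnit_det M).mp (Matrix.mulVec_injective_iff_isUnit.mp hinj)

theorem nl1_aux_Minv_norm_le {n m d : ℕ} (a : Fin n → Fin m → Euc d) (c : Fin n → Fin m → ℝ)
    (hc : ∀ i j, 0 ≤ c i j) (lam : ℝ) (hlam : 0 < lam) (u : Euc d) :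
    ‖mulVecE (Hmat a c + lam • (1 : Matrix (Fin d) (Fin d) ℝ))⁻¹ u‖ ≤ ‖u‖ / lam := by
  set M := Hmat a c + lam • (1 : Matrix (Fin d) (Fin d) ℝ) with hM
  have hdet : IsUnit M.det := nl1_aux_Mdet_isUnit a c hc lam hlam
  set w : Euc d := mulVecE M⁻¹ u with hw
  have hMw : mulVecE M w = u := by
    show WithLp.toLp 2 (M.mulVec (M⁻¹.mulVec u.ofLp)) = u
    rw [Matrix.mulVec_mulVec, Matrix.mul_nonsing_inv M hdet, Matrix.one_mulVec, WithLp.toLp_ofLp]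
  have hq := nl1_aux_quad_lower a c hc lam w
  rw [hMw] at hq
  have hcs : rinner w u ≤ ‖w‖ * ‖u‖ := real_inner_le_norm w u
  have hle : lam * ‖w‖ ^ 2 ≤ ‖w‖ * ‖u‖ := le_trans hq hcs
  rcases eq_or_lt_of_le (norm_nonneg w) with h0 | h0
  · rw [← h0]; positivity
  · rw [le_div_iff₀ hlam]
    nlinarith

open InnerProductSpace in
theorem nl1_aux_hfd_comp {d : ℕ} (φ : ℝ → ℝ) (a y : Euc d) (hφ : Differentiable ℝ φ) :
    HasFDerivAt (fun z => φ (rinner a z))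
      (toDual ℝ (Euc d) (deriv φ (rinner a y) • a)) y := by
  have h1 : HasFDerivAt (fun z : Euc d => (inner ℝ a z : ℝ)) (innerSL ℝ a) y :=
    (innerSL ℝ a).hasFDerivAt
  have h2 := ((hφ (rinner a y)).hasDerivAt).comp_hasFDerivAt y h1
  have heq : (deriv φ (rinner a y)) • (innerSL ℝ a)
      = (toDual ℝ (Euc d) ((deriv φ (rinner a y)) • a) : Euc d →L[ℝ] ℝ) := by
    ext v; simp [inner_smul_left]
  rwa [heq] at h2

open InnerProductSpace in
theorem nl1_aux_hfd_normsq {d : ℕ} (lam : ℝ) (y : Euc d) :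
    HasFDerivAt (fun z : Euc d => lam / 2 * ‖z‖ ^ 2) (toDual ℝ (Euc d) (lam • y)) y := by
  have h1 : HasFDerivAt (fun z : Euc d => (inner ℝ z z : ℝ))
      ((fderivInnerCLM ℝ (y, y)).comp
        ((ContinuousLinearMap.id ℝ (Euc d)).prod (ContinuousLinearMap.id ℝ (Euc d)))) y :=
    (hasFDerivAt_id y).inner ℝ (hasFDerivAt_id y)
  have h2 := h1.const_mul (lam / 2)
  have heq : ((lam / 2) • (fderivInnerCLM ℝ (y, y)).comp
      ((ContinuousLinearMap.id ℝ (Euc d)).prod (ContinuousLinearMap.id ℝ (Euc d))))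
      = (toDual ℝ (Euc d) (lam • y) : Euc d →L[ℝ] ℝ) := by
    ext v
    simp [fderivInnerCLM_apply, real_inner_comm y v, inner_smul_left]
    ring
  rw [heq] at h2
  apply h2.congr_of_eventuallyEq
  filter_upwards with z
  rw [real_inner_self_eq_norm_sq]

open InnerProductSpace in
theorem nl1_aux_hasGradP {n m d : ℕ} (a : Fin n → Fin m → Euc d) (φ : Fin n → Fin m → ℝ → ℝ)
    (hsmooth : ∀ i j, ContDiff ℝ 2 (φ i j)) (lam : ℝ)
    (P : Euc d → ℝ)
    (hP : ∀ y, P y = ((n : ℝ) * m)⁻¹ * (∑ i, ∑ j, φ i j (rinner (a i j) y))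
        + lam / 2 * ‖y‖ ^ 2) (y : Euc d) :
    HasGradientAt P
      (((n : ℝ) * m)⁻¹ • (∑ i, ∑ j, deriv (φ i j) (rinner (a i j) y) • a i j) + lam • y) y := by
  rw [hasGradientAt_iff_hasFDerivAt]
  have hsum : HasFDerivAt (fun z => ∑ i, ∑ j, φ i j (rinner (a i j) z))
      (∑ i, ∑ j, toDual ℝ (Euc d) (deriv (φ i j) (rinner (a i j) y) • a i j)) y := by
    apply HasFDerivAt.fun_sum
    intro i _
    apply HasFDerivAt.fun_sum
    intro j _
    exact nl1_aux_hfd_comp (φ i j) (a i j) y ((hsmooth i j).differentiable two_ne_zero)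
  have hmul := hsum.const_mul (((n : ℝ) * m)⁻¹)
  have htot := hmul.fun_add (nl1_aux_hfd_normsq lam y)
  have hfun : (fun z => ((n : ℝ) * m)⁻¹ * (∑ i, ∑ j, φ i j (rinner (a i j) z))
      + lam / 2 * ‖z‖ ^ 2) = P := by funext z; rw [hP z]
  rw [hfun] at htot
  have heq : (((n : ℝ) * m)⁻¹ •
        ∑ i, ∑ j, toDual ℝ (Euc d) (deriv (φ i j) (rinner (a i j) y) • a i j))
      + toDual ℝ (Euc d) (lam • y)
      = toDual ℝ (Euc d) (((n : ℝ) * m)⁻¹ •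
          (∑ i, ∑ j, deriv (φ i j) (rinner (a i j) y) • a i j) + lam • y) := by
    simp only [← _root_.map_sum, ← _root_.map_smul, ← _root_.map_add]
  rwa [heq] at htot
set_option maxHeartbeats 1600000

/-- one NL1-type Newton step with nonnegative coefficients. -/
theorem nl1_iterate_bound
    {n m d : ℕ} (hn : 0 < n) (hm : 0 < m) (hd : 0 < d)
    (ν γ lam R : ℝ) (hν : 0 ≤ ν) (hγ : 0 < γ) (hlam : 0 < lam)
    (a : Fin n → Fin m → Euc d) (φ : Fin n → Fin m → ℝ → ℝ)
    (φ'' : Fin n → Fin m → ℝ → ℝ) (hφ'' : ∀ i j, φ'' i j = deriv (deriv (φ i j)))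
    (hsmooth : ∀ i j, ContDiff ℝ 2 (φ i j))
    (hbdd : ∀ i j t, |φ'' i j t| ≤ γ)
    (hlip : ∀ i j s t, |φ'' i j s - φ'' i j t| ≤ ν * |s - t|)
    (hRub : ∀ i j, ‖a i j‖ ≤ R) (hRmem : ∃ i j, R = ‖a i j‖)
    (P : Euc d → ℝ)
    (hP : ∀ y, P y = ((n : ℝ) * m)⁻¹ * (∑ i, ∑ j, φ i j (rinner (a i j) y))
        + lam / 2 * ‖y‖ ^ 2)
    (xstar : Euc d) (hmin : ∀ y, P xstar ≤ P y)
    (c : Fin n → Fin m → ℝ) (hc : ∀ i j, 0 ≤ c i j)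
    (x xplus : Euc d)
    (hstep : xplus = x - mulVecE
        (Hmat a c + lam • (1 : Matrix (Fin d) (Fin d) ℝ))⁻¹ (gradient P x)) :
    ‖xplus - xstar‖ ^ 2 ≤
      2 * R ^ 4 / ((n : ℝ) * m * lam ^ 2) *
        (∑ i, ∑ j, (c i j - φ'' i j (rinner (a i j) xstar)) ^ 2) * ‖x - xstar‖ ^ 2 +
      ν ^ 2 * R ^ 6 / (2 * lam ^ 2) * ‖x - xstar‖ ^ 4 := by
  have hN : (0 : ℝ) < (n : ℝ) * m := by positivity
  set N : ℝ := (n : ℝ) * m with hNdef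
  set δ : Euc d := x - xstar with hδdef
  set M : Matrix (Fin d) (Fin d) ℝ := Hmat a c + lam • (1 : Matrix (Fin d) (Fin d) ℝ)
    with hMdef
  obtain ⟨i0, j0, hR0⟩ := hRmem
  have hRnn : 0 ≤ R := hR0 ▸ norm_nonneg _
  -- abbreviations
  set gx : Fin n → Fin m → ℝ := fun i j => deriv (φ i j) (rinner (a i j) x) with hgxdef
  set gs : Fin n → Fin m → ℝ := fun i j => deriv (φ i j) (rinner (a i j) xstar) with hgsdef
  set hsv : Fin n → Fin m → ℝ := fun i j => φ'' i j (rinner (a i j) xstar) with hhsdef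
  set E : Fin n → Fin m → ℝ :=
    fun i j => c i j * rinner (a i j) δ - (gx i j - gs i j) with hEdef
  set S : ℝ := ∑ i, ∑ j, (c i j - hsv i j) ^ 2 with hSdef
  set T : ℝ := ∑ i, ∑ j, |c i j - hsv i j| with hTdef
  -- gradient facts
  have hgradx := nl1_aux_hasGradP a φ hsmooth lam P hP x
  have hgrads := nl1_aux_hasGradP a φ hsmooth lam P hP xstar
  have hgx' : gradient P x = N⁻¹ • (∑ i, ∑ j, gx i j • a i j) + lam • x :=
    hgradx.gradient
  have hstar : N⁻¹ • (∑ i, ∑ j, gs i j • a i j) + lam • xstar = 0 := by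
    have hloc : IsLocalMin P xstar := Filter.Eventually.of_forall hmin
    have h0 := hloc.hasFDerivAt_eq_zero hgrads.hasFDerivAt
    apply (InnerProductSpace.toDual ℝ (Euc d)).injective
    rw [_root_.map_zero]
    exact h0
  have hdet : IsUnit M.det := nl1_aux_Mdet_isUnit a c hc lam hlam
  -- reduction to the inverse bound
  have hxp : xplus - xstar = mulVecE M⁻¹ (mulVecE M δ - gradient P x) := by
    rw [hstep]
    have hsub' : mulVecE M⁻¹ (mulVecE M δ - gradient P x)
        = mulVecE M⁻¹ (mulVecE M δ) - mulVecE M⁻¹ (gradient P x) := by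
      simp only [mulVecE, WithLp.ofLp_sub, Matrix.mulVec_sub, WithLp.toLp_sub]
    have hMM : mulVecE M⁻¹ (mulVecE M δ) = δ := by
      show WithLp.toLp 2 (M⁻¹.mulVec (M.mulVec δ.ofLp)) = δ
      rw [Matrix.mulVec_mulVec, Matrix.nonsing_inv_mul M hdet, Matrix.one_mulVec, WithLp.toLp_ofLp]
    rw [hsub', hMM, hδdef]
    abel
  -- the error vector
  have hwval : mulVecE M δ - gradient P x = N⁻¹ • (∑ i, ∑ j, E i j • a i j) := by
    have h1 : mulVecE M δ
        = N⁻¹ • (∑ i, ∑ j, (c i j * rinner (a i j) δ) • a i j) + lam • δ := by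
      rw [hMdef, nl1_aux_mulVecE_addlam, nl1_aux_mulVecE_Hmat]
    have hSE : (∑ i, ∑ j, E i j • a i j)
        = (∑ i, ∑ j, (c i j * rinner (a i j) δ) • a i j)
          - ((∑ i, ∑ j, gx i j • a i j) - (∑ i, ∑ j, gs i j • a i j)) := by
      simp only [hEdef, sub_smul, Finset.sum_sub_distrib]
    have hgoal : (N⁻¹ • (∑ i, ∑ j, (c i j * rinner (a i j) δ) • a i j) + lam • δ)
        - (N⁻¹ • (∑ i, ∑ j, gx i j • a i j) + lam • x)
        = N⁻¹ • ((∑ i, ∑ j, (c i j * rinner (a i j) δ) • a i j)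
            - ((∑ i, ∑ j, gx i j • a i j) - (∑ i, ∑ j, gs i j • a i j)))
          - (N⁻¹ • (∑ i, ∑ j, gs i j • a i j) + lam • xstar) := by
      rw [hδdef]
      module
    rw [h1, hgx', hSE, hgoal, hstar, sub_zero]
  -- per-term bound
  have hterm : ∀ i j, ‖E i j • a i j‖
      ≤ R ^ 2 * ‖δ‖ * |c i j - hsv i j| + ν / 2 * R ^ 3 * ‖δ‖ ^ 2 := by
    intro i j
    have hr : rinner (a i j) x - rinner (a i j) xstar = rinner (a i j) δ := by
      rw [hδdef]; simp [rinner, inner_sub_right]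
    have hlip' : ∀ s t, |deriv (deriv (φ i j)) s - deriv (deriv (φ i j)) t| ≤ ν * |s - t| := by
      intro s t; have := hlip i j s t; rwa [hφ'' i j] at this
    have htay := nl1_aux_taylor_lip (φ i j) (hsmooth i j) ν hlip'
      (rinner (a i j) x) (rinner (a i j) xstar)
    rw [hr] at htay
    have hdd : deriv (deriv (φ i j)) (rinner (a i j) xstar) = hsv i j := by
      simp only [hhsdef, hφ'' i j]
    rw [hdd] at htay
    set r : ℝ := rinner (a i j) δ with hrdef
    have hEeq : E i j = (c i j - hsv i j) * r - (gx i j - gs i j - hsv i j * r) := by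
      rw [hEdef]; ring
    have habs : |E i j| ≤ |c i j - hsv i j| * |r| + ν / 2 * r ^ 2 := by
      rw [hEeq]
      calc |(c i j - hsv i j) * r - (gx i j - gs i j - hsv i j * r)|
          ≤ |(c i j - hsv i j) * r| + |gx i j - gs i j - hsv i j * r| := abs_sub _ _
        _ ≤ |c i j - hsv i j| * |r| + ν / 2 * r ^ 2 := by
            rw [abs_mul]
            exact add_le_add le_rfl htay
    have hrb : |r| ≤ R * ‖δ‖ := by
      calc |r| ≤ ‖a i j‖ * ‖δ‖ := abs_real_inner_le_norm (a i j) δ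
        _ ≤ R * ‖δ‖ := mul_le_mul_of_nonneg_right (hRub i j) (norm_nonneg _)
    have hr2 : r ^ 2 ≤ R ^ 2 * ‖δ‖ ^ 2 := by
      nlinarith [sq_abs r, abs_nonneg r]
    have h1 : |E i j| ≤ |c i j - hsv i j| * (R * ‖δ‖) + ν / 2 * (R ^ 2 * ‖δ‖ ^ 2) := by
      have h2 := mul_le_mul_of_nonneg_left hrb (abs_nonneg (c i j - hsv i j))
      have h3 := mul_le_mul_of_nonneg_left hr2 (by linarith : (0:ℝ) ≤ ν / 2)
      linarith
    have hbnn : 0 ≤ |c i j - hsv i j| * (R * ‖δ‖) + ν / 2 * (R ^ 2 * ‖δ‖ ^ 2) := by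
      have : (0:ℝ) ≤ ν / 2 := by linarith
      positivity
    calc ‖E i j • a i j‖ = |E i j| * ‖a i j‖ := by
          rw [norm_smul, Real.norm_eq_abs]
      _ ≤ (|c i j - hsv i j| * (R * ‖δ‖) + ν / 2 * (R ^ 2 * ‖δ‖ ^ 2)) * R :=
          mul_le_mul h1 (hRub i j) (norm_nonneg _) hbnn
      _ = R ^ 2 * ‖δ‖ * |c i j - hsv i j| + ν / 2 * R ^ 3 * ‖δ‖ ^ 2 := by ring
  -- sum bound
  have hWsum : ‖∑ i, ∑ j, E i j • a i j‖ ≤ ∑ i, ∑ j, ‖E i j • a i j‖ :=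
    (norm_sum_le _ _).trans (Finset.sum_le_sum fun i _ => norm_sum_le _ _)
  have hsum2 : (∑ i, ∑ j, ‖E i j • a i j‖)
      ≤ R ^ 2 * ‖δ‖ * T + N * (ν / 2 * R ^ 3 * ‖δ‖ ^ 2) := by
    calc (∑ i, ∑ j, ‖E i j • a i j‖)
        ≤ ∑ i, ∑ j, (R ^ 2 * ‖δ‖ * |c i j - hsv i j| + ν / 2 * R ^ 3 * ‖δ‖ ^ 2) :=
          Finset.sum_le_sum fun i _ => Finset.sum_le_sum fun j _ => hterm i j
      _ = R ^ 2 * ‖δ‖ * T + N * (ν / 2 * R ^ 3 * ‖δ‖ ^ 2) := by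
          rw [hTdef, hNdef]
          simp only [Finset.sum_add_distrib, ← Finset.mul_sum, Finset.sum_const,
            Finset.card_univ, Fintype.card_fin, nsmul_eq_mul]
          push_cast
          ring
  -- norm bound on the step
  set b1 : ℝ := N⁻¹ * (R ^ 2 * ‖δ‖ * T) with hb1def
  set b2 : ℝ := ν / 2 * R ^ 3 * ‖δ‖ ^ 2 with hb2def
  have hwn : ‖mulVecE M δ - gradient P x‖ ≤ b1 + b2 := by
    rw [hwval, norm_smul, Real.norm_eq_abs, abs_of_nonneg (by positivity : (0:ℝ) ≤ N⁻¹)]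
    calc N⁻¹ * ‖∑ i, ∑ j, E i j • a i j‖
        ≤ N⁻¹ * (R ^ 2 * ‖δ‖ * T + N * (ν / 2 * R ^ 3 * ‖δ‖ ^ 2)) :=
          mul_le_mul_of_nonneg_left (hWsum.trans hsum2) (by positivity)
      _ = b1 + b2 := by
          rw [hb1def, hb2def, mul_add, inv_mul_cancel_left₀ hN.ne']
  have hzB : ‖xplus - xstar‖ ≤ (b1 + b2) / lam := by
    rw [hxp]
    have h4 := nl1_aux_Minv_norm_le a c hc lam hlam (mulVecE M δ - gradient P x)
    rw [← hMdef] at h4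
    refine h4.trans ?_
    gcongr
  -- nonnegativity facts
  have hTnn : 0 ≤ T := by
    rw [hTdef]
    exact Finset.sum_nonneg fun i _ => Finset.sum_nonneg fun j _ => abs_nonneg _
  have hSnn : 0 ≤ S := by
    rw [hSdef]
    exact Finset.sum_nonneg fun i _ => Finset.sum_nonneg fun j _ => sq_nonneg _
  have hb1nn : 0 ≤ b1 := by rw [hb1def]; positivity
  have hb2nn : 0 ≤ b2 := by rw [hb2def]; positivity
  -- Cauchy-Schwarz on the coefficient error
  have hT2 : T ^ 2 ≤ N * S := by
    have h5 : T = ∑ p : Fin n × Fin m, |c p.1 p.2 - hsv p.1 p.2| := by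
      rw [hTdef]
      exact (Fintype.sum_prod_type (f := fun p : Fin n × Fin m => |c p.1 p.2 - hsv p.1 p.2|)).symm
    have h6 := sq_sum_le_card_mul_sum_sq
      (s := (Finset.univ : Finset (Fin n × Fin m)))
      (f := fun p => |c p.1 p.2 - hsv p.1 p.2|)
    rw [← h5] at h6
    have h7 : (∑ p : Fin n × Fin m, |c p.1 p.2 - hsv p.1 p.2| ^ 2) = S := by
      simp_rw [sq_abs]
      rw [hSdef]
      exact Fintype.sum_prod_type (f := fun p : Fin n × Fin m => (c p.1 p.2 - hsv p.1 p.2) ^ 2)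
    have h8 : ((Finset.univ : Finset (Fin n × Fin m)).card : ℝ) = N := by
      simp [hNdef]
    rw [h7] at h6
    calc T ^ 2 ≤ ((Finset.univ : Finset (Fin n × Fin m)).card : ℝ) * S := h6
      _ = N * S := by rw [h8]
  have hb1sq : b1 ^ 2 ≤ N⁻¹ * R ^ 4 * ‖δ‖ ^ 2 * S := by
    calc b1 ^ 2 = N⁻¹ ^ 2 * R ^ 4 * ‖δ‖ ^ 2 * T ^ 2 := by rw [hb1def]; ring
      _ ≤ N⁻¹ ^ 2 * R ^ 4 * ‖δ‖ ^ 2 * (N * S) := by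
          apply mul_le_mul_of_nonneg_left hT2 (by positivity)
      _ = N⁻¹ * R ^ 4 * ‖δ‖ ^ 2 * S * (N⁻¹ * N) := by ring
      _ = N⁻¹ * R ^ 4 * ‖δ‖ ^ 2 * S := by rw [inv_mul_cancel₀ hN.ne']; ring
  have hBsq : (b1 + b2) ^ 2
      ≤ 2 * (N⁻¹ * R ^ 4 * ‖δ‖ ^ 2 * S) + ν ^ 2 / 2 * R ^ 6 * ‖δ‖ ^ 4 := by
    have hb2sq : b2 ^ 2 = ν ^ 2 / 4 * R ^ 6 * ‖δ‖ ^ 4 := by rw [hb2def]; ring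
    nlinarith [sq_nonneg (b1 - b2), hb1sq]
  have hz2 : ‖xplus - xstar‖ ^ 2 ≤ (b1 + b2) ^ 2 / lam ^ 2 := by
    rw [← div_pow]
    exact pow_le_pow_left₀ (norm_nonneg _) hzB 2
  calc ‖xplus - xstar‖ ^ 2 ≤ (b1 + b2) ^ 2 / lam ^ 2 := hz2
    _ ≤ (2 * (N⁻¹ * R ^ 4 * ‖δ‖ ^ 2 * S) + ν ^ 2 / 2 * R ^ 6 * ‖δ‖ ^ 4) / lam ^ 2 := by
        gcongr
    _ = 2 * R ^ 4 / (N * lam ^ 2) * S * ‖δ‖ ^ 2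
        + ν ^ 2 * R ^ 6 / (2 * lam ^ 2) * ‖δ‖ ^ 4 := by
        field_simp
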